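/- Let R be a positive integer and suppose Λ_1,...,Λ_M are sublattices of Z^N of rank N−1 whose union contains all integer points x with max_i |x_i| ≤ R. Then M ≥ 2R − 1. -/

import Mathlib

open MvPolynomial

/-- A polynomial vanishing on a grid `S^N` with `S` larger than each partial degree is zero. -/
lemma aux_grid_vanish : ∀ (N : ℕ) (S : Finset ℚ) (P : MvPolynomial (Fin N) ℚ),
    (∀ k, P.degreeOf k < S.card) →
    (∀ x : Fin N → ℚ, (∀ k, x k ∈ S) → eval x P = 0) → P = 0 := by
  intro N
  induction N with
  | zero =>
    intro S P _ hev
    obtain ⟨r, rfl⟩ := MvPolynomial.C_surjective (Fin 0) P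
    have := hev (fun k => 0) (fun k => k.elim0)
    rw [eval_C] at this
    rw [this, map_zero]
  | succ n IH =>
    intro S P hdeg hev
    have key : ∀ i, (finSuccEquiv ℚ n P).coeff i = 0 := by
      intro i
      apply IH S
      · intro j
        exact lt_of_le_of_lt (degreeOf_coeff_finSuccEquiv P j i) (hdeg j.succ)
      · intro a ha
        have hφ : Polynomial.map (eval a) (finSuccEquiv ℚ n P) = 0 := by
          apply Polynomial.eq_zero_of_natDegree_lt_card_of_eval_eq_zero' _ S
          · intro s hs
            rw [← eval_eq_eval_mv_eval']
            apply hev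
            intro k
            refine Fin.cases ?_ ?_ k
            · simpa using hs
            · intro j; simpa using ha j
          · refine lt_of_le_of_lt Polynomial.natDegree_map_le ?_
            rw [natDegree_finSuccEquiv]
            exact hdeg 0
        have h2 := congrArg (fun q => Polynomial.coeff q i) hφ
        simpa [Polynomial.coeff_map] using h2
    have h0 : finSuccEquiv ℚ n P = 0 := Polynomial.ext (by simpa using key)
    exact (finSuccEquiv ℚ n).injective (by simp [h0])

/-- The coercion map `ℤ^N → ℚ^N` as a `ℤ`-linear map. -/
def aux_cast (N : ℕ) : (Fin N → ℤ) →ₗ[ℤ] (Fin N → ℚ) where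
  toFun x := fun k => (x k : ℚ)
  map_add' x y := by ext k; simp
  map_smul' c x := by ext k; simp [zsmul_eq_mul]

/-- A sublattice of rank `N - 1 < N` is annihilated by a nonzero rational linear form. -/
lemma aux_exists_form (N : ℕ) (hN : 1 ≤ N) (Λ : Submodule ℤ (Fin N → ℤ))
    (hrk : Module.finrank ℤ Λ = N - 1) :
    ∃ a : Fin N → ℚ, a ≠ 0 ∧ ∀ x ∈ Λ, ∑ k, a k * (x k : ℚ) = 0 := by
  classical
  set g := aux_cast N
  -- choose a basis of Λ, of cardinality N - 1
  let ι := Module.Free.ChooseBasisIndex ℤ ↥Λ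
  let b : Module.Basis ι ℤ ↥Λ := Module.Free.chooseBasis ℤ ↥Λ
  have hcard : Fintype.card ι = N - 1 := by
    rw [← hrk, Module.finrank_eq_card_chooseBasisIndex]
  -- the span of the images of the basis vectors
  set W : Submodule ℚ (Fin N → ℚ) :=
    Submodule.span ℚ (Set.range fun j : ι => g ((b j : Fin N → ℤ))) with hW
  have hmem : ∀ x ∈ Λ, g x ∈ W := by
    intro x hx
    have hrepr := b.sum_repr ⟨x, hx⟩
    have : g x = ∑ j : ι, (b.repr ⟨x, hx⟩ j) • g ((b j : Fin N → ℤ)) := by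
      calc g x = g ((⟨x, hx⟩ : ↥Λ) : Fin N → ℤ) := rfl
        _ = g ((∑ j : ι, (b.repr ⟨x, hx⟩ j) • b j : ↥Λ) : Fin N → ℤ) := by rw [hrepr]
        _ = ∑ j : ι, (b.repr ⟨x, hx⟩ j) • g ((b j : Fin N → ℤ)) := by
            rw [Submodule.coe_sum]
            rw [map_sum]
            congr 1; ext j
            rw [Submodule.coe_smul, map_smul]
    rw [this]
    apply Submodule.sum_mem
    intro j _
    have h1 : g ((b j : Fin N → ℤ)) ∈ W :=
      Submodule.subset_span (Set.mem_range_self j)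
    have h2 : (b.repr ⟨x, hx⟩ j) • g ((b j : Fin N → ℤ))
        = ((b.repr ⟨x, hx⟩ j : ℚ)) • g ((b j : Fin N → ℤ)) := by
      rw [Int.cast_smul_eq_zsmul]
    rw [h2]
    exact Submodule.smul_mem _ _ h1
  -- `W` is a proper subspace
  have hWlt : W < ⊤ := by
    apply _root_.span_lt_top_of_card_lt_finrank
    have h1 : (Set.range fun j : ι => g ((b j : Fin N → ℤ))).toFinset.card
        ≤ Fintype.card ι := by
      rw [Set.toFinset_range]
      exact Finset.card_image_le.trans (by simp)
    have h2 : Module.finrank ℚ (Fin N → ℚ) = N := by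
      simp [Module.finrank_pi]
    omega
  -- get a nonzero functional vanishing on `W`
  obtain ⟨f, hf0, hfW⟩ := Submodule.exists_dual_map_eq_bot_of_lt_top hWlt inferInstance
  refine ⟨fun k => f (Pi.single k 1), ?_, ?_⟩
  · intro ha
    apply hf0
    apply LinearMap.ext
    intro x
    have := LinearMap.pi_apply_eq_sum_univ f x
    rw [this]
    have hz : ∀ k : Fin N, f (Pi.single k 1) = 0 := fun k => congrFun ha k
    simp only [LinearMap.zero_apply]
    refine Finset.sum_eq_zero fun k _ => ?_
    have : (fun j => if k = j then (1:ℚ) else 0) = Pi.single k 1 := by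
      ext j; by_cases h : k = j <;> simp [Pi.single_apply, h, eq_comm]
    rw [this, hz k, smul_zero]
  · intro x hx
    have hgx : g x ∈ W := hmem x hx
    have hfx : f (g x) = 0 := by
      have : f (g x) ∈ W.map f := Submodule.mem_map_of_mem hgx
      rw [hfW] at this
      exact (Submodule.mem_bot ℚ).1 this
    rw [← hfx, LinearMap.pi_apply_eq_sum_univ f (g x)]
    refine Finset.sum_congr rfl fun k _ => ?_
    have : (fun j => if k = j then (1:ℚ) else 0) = Pi.single k 1 := by
      ext j; by_cases h : k = j <;> simp [Pi.single_apply, h, eq_comm]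
    rw [this]
    have : g x k = (x k : ℚ) := rfl
    rw [smul_eq_mul, this, mul_comm]

theorem stmt_19 (N M R : ℕ) (hN : 2 ≤ N) (hR : 0 < R)
    (Λ : Fin M → Submodule ℤ (Fin N → ℤ))
    (hrk : ∀ i, Module.finrank ℤ (Λ i) = N - 1)
    (hcover : ∀ x : Fin N → ℤ, (∀ k, |x k| ≤ (R : ℤ)) → ∃ i, x ∈ Λ i) :
    2 * (R : ℤ) - 1 ≤ (M : ℤ) := by
  classical
  by_contra hlt
  push_neg at hlt
  have hMR : M + 1 < 2 * R := by exact_mod_cast (by linarith : (M : ℤ) + 1 < 2 * R)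
  have hN1 : 1 ≤ N := by omega
  choose a ha0 hav using fun i => aux_exists_form N hN1 (Λ i) (hrk i)
  -- the linear forms as polynomials
  set L : Fin M → MvPolynomial (Fin N) ℚ :=
    fun i => ∑ k, MvPolynomial.C (a i k) * MvPolynomial.X k with hL
  set P : MvPolynomial (Fin N) ℚ := ∏ i, L i with hP
  have hevalL : ∀ (i : Fin M) (x : Fin N → ℚ), eval x (L i) = ∑ k, a i k * x k := by
    intro i x
    rw [hL]
    simp [eval_sum]
  -- each factor is nonzero
  have hLne : ∀ i, L i ≠ 0 := by
    intro i hLi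
    obtain ⟨k, hk⟩ : ∃ k, a i k ≠ 0 := by
      by_contra h
      push_neg at h
      exact ha0 i (funext h)
    apply hk
    have := hevalL i (Pi.single k 1)
    rw [hLi, map_zero] at this
    have h2 : ∑ k', a i k' * (Pi.single k 1 : Fin N → ℚ) k' = a i k := by
      rw [Finset.sum_eq_single k]
      · simp
      · intro j _ hj; simp [Pi.single_apply, hj]
      · intro h; exact absurd (Finset.mem_univ k) h
    rw [h2] at this
    exact this.symm
  have hPne : P ≠ 0 := by
    rw [hP]
    exact Finset.prod_ne_zero_iff.mpr fun i _ => hLne i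
  -- the grid
  set S : Finset ℚ := (Finset.Icc (-(R:ℤ)+1) ((R:ℤ)-1)).image (Int.cast : ℤ → ℚ) with hS
  have hScard : S.card = 2 * R - 1 := by
    rw [hS, Finset.card_image_of_injective _ Int.cast_injective, Int.card_Icc]
    have : ((R:ℤ) - 1) + 1 - (-(R:ℤ)+1) = 2 * R - 1 := by ring
    rw [this]
    have h1 : (1:ℤ) ≤ 2 * R := by exact_mod_cast Nat.one_le_iff_ne_zero.mpr (by omega)
    omega
  -- degree bound
  have hdeg : ∀ k, P.degreeOf k < S.card := by
    intro k
    have h1 : P.totalDegree ≤ M := by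
      rw [hP]
      calc P.totalDegree ≤ ∑ i, (L i).totalDegree := totalDegree_finset_prod _ _
        _ ≤ ∑ _i : Fin M, 1 := by
            apply Finset.sum_le_sum
            intro i _
            rw [hL]
            refine (totalDegree_finset_sum _ _).trans ?_
            apply Finset.sup_le
            intro k' _
            refine (totalDegree_mul _ _).trans ?_
            simp [totalDegree_C, totalDegree_X]
        _ = M := by simp
    have h2 := degreeOf_le_totalDegree P k
    rw [hScard]
    omega
  -- vanishing on the grid
  have hvanish : ∀ x : Fin N → ℚ, (∀ k, x k ∈ S) → eval x P = 0 := by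
    intro x hx
    have hx' : ∀ k, ∃ z : ℤ, (-(R:ℤ)+1 ≤ z ∧ z ≤ (R:ℤ)-1) ∧ (z:ℚ) = x k := by
      intro k
      have := hx k
      rw [hS, Finset.mem_image] at this
      obtain ⟨z, hz1, hz2⟩ := this
      rw [Finset.mem_Icc] at hz1
      exact ⟨z, hz1, hz2⟩
    choose y hy1 hy2 using hx'
    have hyR : ∀ k, |y k| ≤ (R:ℤ) := by
      intro k
      have := hy1 k
      rw [abs_le]
      omega
    obtain ⟨i, hi⟩ := hcover y hyR
    rw [hP, map_prod]
    apply Finset.prod_eq_zero (Finset.mem_univ i)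
    rw [hevalL]
    have := hav i y hi
    calc ∑ k, a i k * x k = ∑ k, a i k * ((y k : ℤ) : ℚ) := by
          refine Finset.sum_congr rfl fun k _ => ?_
          rw [hy2 k]
      _ = 0 := this
  exact hPne (aux_grid_vanish N S P hdeg hvanish)
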